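/- Block characterisation of quaternionic frames whose complexification is tight: let V = V₁ + V₂·j ∈ ℍ^{d×n} with V₁, V₂ ∈ ℂ^{d×n} (Cayley–Dickson decomposition of each entry), and let V_ℂ ∈ ℂ^{2d×n} be the matrix obtained by stacking V₁ on top of conj(V₂) (entrywise complex conjugate). Then for a real A > 0, V_ℂ·V_ℂᴴ = (A/2)·I_{2d} if and only if V₁·V₁ᴴ = (A/2)·I_d, V₂·V₂ᴴ = (A/2)·I_d, V₁·V₂ᵀ = 0, and V₂·V₁ᵀ = 0. -/

import Mathlib

open Matrix BigOperators

/-- Block characterisation of quaternionic frames whose complexification is tight: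
for `V = V₁ + V₂·j ∈ ℍ^{d×n}` with Cayley–Dickson components `V₁, V₂ ∈ ℂ^{d×n}`,
and `V_ℂ ∈ ℂ^{2d×n}` stacking `V₁` on top of `conj(V₂)`, one has
`V_ℂ V_ℂᴴ = (A/2) I_{2d}` iff `V₁ V₁ᴴ = (A/2) I_d`, `V₂ V₂ᴴ = (A/2) I_d`,
`V₁ V₂ᵀ = 0` and `V₂ V₁ᵀ = 0`. -/
theorem complexification_tight_iff_blocks (d n : ℕ)
    (V₁ V₂ : Matrix (Fin d) (Fin n) ℂ) (A : ℝ) (hA : 0 < A) :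
    (Matrix.fromRows V₁ (V₂.map (starRingEnd ℂ)) *
        (Matrix.fromRows V₁ (V₂.map (starRingEnd ℂ)))ᴴ =
        (A / 2) • (1 : Matrix (Fin d ⊕ Fin d) (Fin d ⊕ Fin d) ℂ)) ↔
      (V₁ * V₁ᴴ = (A / 2) • (1 : Matrix (Fin d) (Fin d) ℂ) ∧
        V₂ * V₂ᴴ = (A / 2) • (1 : Matrix (Fin d) (Fin d) ℂ) ∧
        V₁ * V₂ᵀ = 0 ∧ V₂ * V₁ᵀ = 0) := by
  set c := starRingEnd ℂ with hc
  have hinj : ∀ M N : Matrix (Fin d) (Fin d) ℂ, M.map c = N.map c → M = N := by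
    intro M N h
    ext i j
    have := congrFun (congrFun h i) j
    simp only [Matrix.map_apply, hc, starRingEnd_apply] at this
    exact star_injective this
  have hW : (V₂.map c)ᴴ = V₂ᵀ := by
    ext i j; simp [conjTranspose_apply, hc]
  have hV1 : V₁ᵀ.map c = V₁ᴴ := by
    ext i j; simp [conjTranspose_apply, hc]
  have hV2 : V₂ᴴ.map c = V₂ᵀ := by
    ext i j; simp [conjTranspose_apply, hc]
  have h1 : V₂.map c * V₁ᴴ = (V₂ * V₁ᵀ).map c := by
    rw [Matrix.map_mul, hV1]
  have h2 : V₂.map c * V₂ᵀ = (V₂ * V₂ᴴ).map c := by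
    rw [Matrix.map_mul, hV2]
  rw [conjTranspose_fromRows_eq_fromCols_conjTranspose, fromRows_mul_fromCols,
    ← fromBlocks_one, fromBlocks_smul, fromBlocks_inj, hW, smul_zero, h1, h2]
  have e1 : (V₂ * V₂ᴴ).map c = (A/2 : ℝ) • (1 : Matrix (Fin d) (Fin d) ℂ) ↔
      V₂ * V₂ᴴ = (A/2 : ℝ) • (1 : Matrix (Fin d) (Fin d) ℂ) := by
    constructor
    · intro h; apply hinj; rw [h]; ext i j
      simp only [Matrix.map_apply, Matrix.smul_apply, Matrix.one_apply, hc]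
      split <;> simp [Complex.conj_ofNat]
    · intro h; rw [h]; ext i j
      simp only [Matrix.map_apply, Matrix.smul_apply, Matrix.one_apply, hc]
      split <;> simp [Complex.conj_ofNat]
  have e2 : (V₂ * V₁ᵀ).map c = 0 ↔ V₂ * V₁ᵀ = 0 := by
    constructor
    · intro h; apply hinj; rw [h]; ext i j; simp [Matrix.map_apply, hc]
    · intro h; rw [h]; ext i j; simp [Matrix.map_apply, hc]
  rw [e1, e2]
  tauto
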